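/- Let A be an m×n complex matrix and W an n×m complex matrix, and let k = max(ind(AW), ind(WA)). Then there exists a unique m×n matrix X satisfying X*W*(AW)^(k+1) = (AW)^k, A*W*X*W*X = X, and (W*A*W*X)^* = W*A*W*X. Moreover this unique X equals A * ((WA)^⊕)^2, where (WA)^⊕ denotes the core-EP inverse of WA. -/

import Mathlib

open Matrix

noncomputable def matIndex {n : ℕ} (M : Matrix (Fin n) (Fin n) ℂ) : ℕ :=
  sInf {j | (M ^ j).rank = (M ^ (j + 1)).rank}

def IsCoreEP {n : ℕ} (M X : Matrix (Fin n) (Fin n) ℂ) : Prop :=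
  X * M ^ (matIndex M + 1) = M ^ (matIndex M) ∧ M * X * X = X ∧ (M * X)ᴴ = M * X

def IsMP {m n : ℕ} (A : Matrix (Fin m) (Fin n) ℂ) (X : Matrix (Fin n) (Fin m) ℂ) : Prop :=
  A * X * A = A ∧ X * A * X = X ∧ (A * X)ᴴ = A * X ∧ (X * A)ᴴ = X * A

def IsDrazin {n : ℕ} (M X : Matrix (Fin n) (Fin n) ℂ) : Prop :=
  M * X = X * M ∧ X * M * X = X ∧ M ^ (matIndex M + 1) * X = M ^ (matIndex M)

namespace CoreEPAux

open scoped ComplexOrder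

variable {n : ℕ}

/-! ### Rank and factorization lemmas -/

lemma exists_mul_eq_of_range_le {B C : Matrix (Fin n) (Fin n) ℂ}
    (h : LinearMap.range B.mulVecLin ≤ LinearMap.range C.mulVecLin) :
    ∃ S : Matrix (Fin n) (Fin n) ℂ, C * S = B := by
  have hmem : ∀ i : Fin n, ∃ v, C.mulVecLin v = B.mulVecLin (Pi.single i 1) :=
    fun i => h (LinearMap.mem_range_self B.mulVecLin (Pi.single i 1))
  choose v hv using hmem
  refine ⟨Matrix.of fun r i => v i r, ?_⟩
  ext r i
  have h1 := congrFun (hv i) r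
  simp only [Matrix.mulVecLin_apply] at h1
  have h2 : B.mulVec (Pi.single i 1) r = B r i := by
    simp [Matrix.mulVec_single]
  rw [h2] at h1
  rw [Matrix.mul_apply, ← h1]
  rfl

lemma range_pow_succ_le (M : Matrix (Fin n) (Fin n) ℂ) (j : ℕ) :
    LinearMap.range (M ^ (j + 1)).mulVecLin ≤ LinearMap.range (M ^ j).mulVecLin := by
  rw [pow_succ, Matrix.mulVecLin_mul]
  exact LinearMap.range_comp_le_range _ _

lemma exists_factor_right (M : Matrix (Fin n) (Fin n) ℂ) {j : ℕ}
    (h : (M ^ j).rank = (M ^ (j + 1)).rank) :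
    ∃ S : Matrix (Fin n) (Fin n) ℂ, M ^ (j + 1) * S = M ^ j := by
  apply exists_mul_eq_of_range_le
  rw [Matrix.rank, Matrix.rank] at h
  have := Submodule.eq_of_le_of_finrank_le (range_pow_succ_le M j) h.le
  rw [this]

lemma exists_factor_left (M : Matrix (Fin n) (Fin n) ℂ) {j : ℕ}
    (h : (M ^ j).rank = (M ^ (j + 1)).rank) :
    ∃ T : Matrix (Fin n) (Fin n) ℂ, T * M ^ (j + 1) = M ^ j := by
  have h' : ((Mᴴ) ^ j).rank = ((Mᴴ) ^ (j + 1)).rank := by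
    rw [← conjTranspose_pow, ← conjTranspose_pow, rank_conjTranspose, rank_conjTranspose, h]
  obtain ⟨S, hS⟩ := exists_factor_right (Mᴴ) h'
  refine ⟨Sᴴ, ?_⟩
  have := congrArg Matrix.conjTranspose hS
  rwa [Matrix.conjTranspose_mul, conjTranspose_pow, conjTranspose_conjTranspose,
    conjTranspose_pow, conjTranspose_conjTranspose] at this

lemma rank_pow_antitone (M : Matrix (Fin n) (Fin n) ℂ) (j : ℕ) :
    (M ^ (j + 1)).rank ≤ (M ^ j).rank := by
  rw [pow_succ]
  exact rank_mul_le_left _ _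

lemma exists_rank_pow_stab (M : Matrix (Fin n) (Fin n) ℂ) :
    ∃ j, (M ^ j).rank = (M ^ (j + 1)).rank := by
  by_contra hc
  push_neg at hc
  have hlt : ∀ j, (M ^ (j + 1)).rank < (M ^ j).rank :=
    fun j => lt_of_le_of_ne (rank_pow_antitone M j) (fun h => hc j h.symm)
  have key : ∀ j, (M ^ j).rank + j ≤ (M ^ 0).rank := by
    intro j
    induction j with
    | zero => simp
    | succ t ih =>
      have := hlt t
      omega
  have := key ((M ^ 0).rank + 1)
  omega

lemma matIndex_spec (M : Matrix (Fin n) (Fin n) ℂ) :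
    (M ^ matIndex M).rank = (M ^ (matIndex M + 1)).rank :=
  Nat.sInf_mem (exists_rank_pow_stab M)

lemma rank_stab (M : Matrix (Fin n) (Fin n) ℂ) {j : ℕ} (hj : matIndex M ≤ j) :
    (M ^ j).rank = (M ^ (j + 1)).rank := by
  obtain ⟨t, rfl⟩ := Nat.exists_eq_add_of_le hj
  induction t with
  | zero => simpa using matIndex_spec M
  | succ s ih =>
    have h := ih (Nat.le_add_right _ _)
    obtain ⟨S, hS⟩ := exists_factor_right M h
    have h2 : M ^ (matIndex M + s + 1 + 1) * S = M ^ (matIndex M + s + 1) := by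
      have := congrArg (fun B => M * B) hS
      rw [← Matrix.mul_assoc, ← pow_succ'] at this
      rw [← pow_succ'] at this
      exact this
    refine le_antisymm ?_ (rank_pow_antitone M _)
    calc (M ^ (matIndex M + (s + 1))).rank
        = (M ^ (matIndex M + s + 1 + 1) * S).rank := by rw [← Nat.add_assoc, h2]
      _ ≤ (M ^ (matIndex M + (s + 1) + 1)).rank := by
          exact rank_mul_le_left (M ^ (matIndex M + s + 1 + 1)) S

/-! ### A partial Moore–Penrose style inverse via the spectral theorem -/

noncomputable def hdag (L : Matrix (Fin n) (Fin n) ℂ) : Matrix (Fin n) (Fin n) ℂ :=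
  ((isHermitian_conjTranspose_mul_self L).eigenvectorUnitary : Matrix (Fin n) (Fin n) ℂ) *
    diagonal (fun i => ((((isHermitian_conjTranspose_mul_self L).eigenvalues i : ℝ) : ℂ))⁻¹) *
    star ((isHermitian_conjTranspose_mul_self L).eigenvectorUnitary : Matrix (Fin n) (Fin n) ℂ)

lemma hdag_conjTranspose (L : Matrix (Fin n) (Fin n) ℂ) : (hdag L)ᴴ = hdag L := by
  set hH := isHermitian_conjTranspose_mul_self L
  set U : Matrix (Fin n) (Fin n) ℂ := (hH.eigenvectorUnitary : Matrix (Fin n) (Fin n) ℂ)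
  have hstar : star U = Uᴴ := rfl
  show (U * _ * star U)ᴴ = U * _ * star U
  rw [hstar, Matrix.conjTranspose_mul, Matrix.conjTranspose_mul, conjTranspose_conjTranspose,
    diagonal_conjTranspose, Matrix.mul_assoc]
  have hdiag : (star fun i => ((((hH.eigenvalues i : ℝ)) : ℂ))⁻¹) =
      fun i => ((((hH.eigenvalues i : ℝ)) : ℂ))⁻¹ := by
    funext i
    simp [Pi.star_apply, star_inv₀, Complex.star_def, Complex.conj_ofReal]
  rw [hdiag]

lemma key_of_unitary (U : Matrix (Fin n) (Fin n) ℂ) (hU : star U * U = 1)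
    (v w : Fin n → ℂ) :
    (U * diagonal v * star U) * (U * diagonal w * star U) =
      U * diagonal (fun i => v i * w i) * star U := by
  have h : U * diagonal v * star U * (U * diagonal w * star U)
      = U * (diagonal v * ((star U * U) * (diagonal w * star U))) := by
    simp only [Matrix.mul_assoc]
  rw [h, hU, Matrix.one_mul, ← Matrix.mul_assoc (diagonal v), diagonal_mul_diagonal,
    ← Matrix.mul_assoc]

lemma hdag_repr (L : Matrix (Fin n) (Fin n) ℂ) :
    ∃ U : Matrix (Fin n) (Fin n) ℂ, star U * U = 1 ∧
      ∃ g d : Fin n → ℂ, hdag L = U * diagonal g * star U ∧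
        Lᴴ * L = U * diagonal d * star U ∧ ∀ i, d i * (g i * d i) = d i := by
  set hH := isHermitian_conjTranspose_mul_self L with hHdef
  refine ⟨(hH.eigenvectorUnitary : Matrix (Fin n) (Fin n) ℂ),
    mem_unitaryGroup_iff'.mp hH.eigenvectorUnitary.2,
    (fun i => ((RCLike.ofReal (hH.eigenvalues i) : ℂ))⁻¹),
    RCLike.ofReal ∘ hH.eigenvalues, rfl, hH.spectral_theorem, ?_⟩
  intro i
  simp only [Function.comp_apply]
  rcases eq_or_ne ((RCLike.ofReal (hH.eigenvalues i) : ℂ)) 0 with h0 | h0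
  · simp [h0]
  · field_simp

lemma hdag_sand (L : Matrix (Fin n) (Fin n) ℂ) :
    (Lᴴ * L) * (hdag L * (Lᴴ * L)) = Lᴴ * L := by
  obtain ⟨U, hU2, g, d, hdag_eq, hspec, hgd⟩ := hdag_repr L
  rw [hdag_eq, hspec, key_of_unitary U hU2, key_of_unitary U hU2]
  have h : (fun i => d i * (g i * d i)) = d := funext hgd
  rw [h]

lemma key1 (L : Matrix (Fin n) (Fin n) ℂ) : L * (hdag L * (Lᴴ * L)) = L := by
  have hH : (Lᴴ * L)ᴴ = Lᴴ * L := isHermitian_conjTranspose_mul_self L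
  have hHdH : (Lᴴ * L) * (hdag L * (Lᴴ * L)) = Lᴴ * L := hdag_sand L
  have hGH : (hdag L * (Lᴴ * L))ᴴ * (Lᴴ * L) = Lᴴ * L := by
    rw [conjTranspose_mul, hH, hdag_conjTranspose, Matrix.mul_assoc]
    exact hHdH
  set G := hdag L * (Lᴴ * L) with hG
  have hB : (L * G - L)ᴴ * (L * G - L) = 0 := by
    rw [conjTranspose_sub, conjTranspose_mul, sub_mul, mul_sub, mul_sub]
    have e1 : Gᴴ * Lᴴ * (L * G) = Lᴴ * L := by
      calc Gᴴ * Lᴴ * (L * G) = Gᴴ * (Lᴴ * L) * G := by simp only [Matrix.mul_assoc]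
        _ = (Lᴴ * L) * G := by rw [hGH]
        _ = Lᴴ * L := by rw [hG, hHdH]
    have e2 : Gᴴ * Lᴴ * L = Lᴴ * L := by rw [Matrix.mul_assoc]; exact hGH
    have e3 : Lᴴ * (L * G) = Lᴴ * L := by rw [← Matrix.mul_assoc, hG]; exact hHdH
    rw [e1, e2, e3]
    simp
  have hB0 := Matrix.conjTranspose_mul_self_eq_zero.mp hB
  have := sub_eq_zero.mp hB0
  rw [hG] at this
  exact this

/-! ### Purely algebraic uniqueness of level-`K` core-EP type inverses -/

lemma core_rep {M Y : Matrix (Fin n) (Fin n) ℂ} (hY2 : M * (Y * Y) = Y) :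
    ∀ j, Y = M ^ j * Y ^ (j + 1) := by
  intro j
  induction j with
  | zero => simp
  | succ t ih =>
    calc Y = M ^ t * Y ^ (t + 1) := ih
      _ = M ^ t * (Y * Y ^ t) := by rw [pow_succ']
      _ = M ^ t * ((M * (Y * Y)) * Y ^ t) := by rw [hY2]
      _ = (M ^ t * M) * (Y * (Y * Y ^ t)) := by simp only [Matrix.mul_assoc]
      _ = M ^ (t + 1) * Y ^ (t + 2) := by
          rw [← pow_succ, ← pow_succ', ← pow_succ']

lemma core_unique {K : ℕ} {M Y Z : Matrix (Fin n) (Fin n) ℂ}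
    (hY1 : Y * M ^ (K + 1) = M ^ K) (hY2 : M * (Y * Y) = Y) (hY3 : (M * Y)ᴴ = M * Y)
    (hZ1 : Z * M ^ (K + 1) = M ^ K) (hZ2 : M * (Z * Z) = Z) (hZ3 : (M * Z)ᴴ = M * Z) :
    Y = Z := by
  have hYrep : Y = M ^ K * Y ^ (K + 1) := core_rep hY2 K
  have hZrep : Z = M ^ K * Z ^ (K + 1) := core_rep hZ2 K
  have hPY : M * Y = M ^ (K + 1) * Y ^ (K + 1) := by
    conv_lhs => rw [hYrep]
    rw [← Matrix.mul_assoc, ← pow_succ']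
  have hPZ : M * Z = M ^ (K + 1) * Z ^ (K + 1) := by
    conv_lhs => rw [hZrep]
    rw [← Matrix.mul_assoc, ← pow_succ']
  have hYP : Y * (M * Y) = Y := by
    rw [hPY, ← Matrix.mul_assoc, hY1, ← hYrep]
  have hPMK : (M * Y) * M ^ (K + 1) = M ^ (K + 1) := by
    rw [Matrix.mul_assoc, hY1, ← pow_succ']
  have hQMK : (M * Z) * M ^ (K + 1) = M ^ (K + 1) := by
    rw [Matrix.mul_assoc, hZ1, ← pow_succ']
  have hQP : (M * Z) * (M * Y) = M * Y := by
    rw [hPY, ← Matrix.mul_assoc, hQMK, ← hPY]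
  have hPQ : (M * Y) * (M * Z) = M * Z := by
    rw [hPZ, ← Matrix.mul_assoc, hPMK, ← hPZ]
  have hPeqQ : M * Y = M * Z := by
    have h1 := congrArg Matrix.conjTranspose hQP
    rw [conjTranspose_mul, hY3, hZ3, hPQ] at h1
    exact h1.symm
  calc Y = Y * (M * Y) := hYP.symm
    _ = Y * (M * Z) := by rw [hPeqQ]
    _ = Y * (M ^ (K + 1) * Z ^ (K + 1)) := by rw [hPZ]
    _ = (Y * M ^ (K + 1)) * Z ^ (K + 1) := by rw [Matrix.mul_assoc]
    _ = M ^ K * Z ^ (K + 1) := by rw [hY1]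
    _ = Z := hZrep.symm

lemma lift_level {M Y : Matrix (Fin n) (Fin n) ℂ} {c K : ℕ}
    (h1 : Y * M ^ (c + 1) = M ^ c) (hc : c ≤ K) : Y * M ^ (K + 1) = M ^ K := by
  obtain ⟨t, rfl⟩ := Nat.exists_eq_add_of_le hc
  have he : c + t + 1 = (c + 1) + t := by omega
  rw [he, pow_add, ← Matrix.mul_assoc, h1, ← pow_add]

/-! ### Existence of a level-`k` core-EP type inverse -/

lemma exists_level (M : Matrix (Fin n) (Fin n) ℂ) {k : ℕ} (hk : matIndex M ≤ k) :
    ∃ Y, Y * M ^ (k + 1) = M ^ k ∧ M * (Y * Y) = Y ∧ (M * Y)ᴴ = M * Y := by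
  obtain ⟨T, hT⟩ := exists_factor_left M (rank_stab M hk)
  obtain ⟨S, hS⟩ := exists_factor_right M (rank_stab M hk)
  refine ⟨M ^ k * (hdag (M ^ (k + 1)) * (M ^ (k + 1))ᴴ), ?_, ?_, ?_⟩
  · rw [← hT]
    calc T * M ^ (k + 1) * (hdag (M ^ (k + 1)) * (M ^ (k + 1))ᴴ) * M ^ (k + 1)
        = T * (M ^ (k + 1) * (hdag (M ^ (k + 1)) * ((M ^ (k + 1))ᴴ * M ^ (k + 1)))) := by
          simp only [Matrix.mul_assoc]
      _ = T * M ^ (k + 1) := by rw [key1]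
  · have hMY : M * (M ^ k * (hdag (M ^ (k + 1)) * (M ^ (k + 1))ᴴ)) =
        M ^ (k + 1) * (hdag (M ^ (k + 1)) * (M ^ (k + 1))ᴴ) := by
      rw [← Matrix.mul_assoc, ← pow_succ']
    rw [← Matrix.mul_assoc M, hMY]
    conv_lhs => rw [← hS]
    conv_rhs => rw [← hS]
    calc M ^ (k + 1) * (hdag (M ^ (k + 1)) * (M ^ (k + 1))ᴴ) *
          (M ^ (k + 1) * S * (hdag (M ^ (k + 1)) * (M ^ (k + 1))ᴴ))
        = M ^ (k + 1) * (hdag (M ^ (k + 1)) * ((M ^ (k + 1))ᴴ * M ^ (k + 1))) *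
            (S * (hdag (M ^ (k + 1)) * (M ^ (k + 1))ᴴ)) := by
          simp only [Matrix.mul_assoc]
      _ = M ^ (k + 1) * (S * (hdag (M ^ (k + 1)) * (M ^ (k + 1))ᴴ)) := by rw [key1]
      _ = M ^ (k + 1) * S * (hdag (M ^ (k + 1)) * (M ^ (k + 1))ᴴ) := by
          rw [Matrix.mul_assoc]
  · rw [← Matrix.mul_assoc M, ← pow_succ', ← Matrix.mul_assoc,
      conjTranspose_mul, conjTranspose_mul, conjTranspose_conjTranspose,
      hdag_conjTranspose]
    simp only [Matrix.mul_assoc]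

/-! ### Rectangular bookkeeping -/

section Rect

variable {m : ℕ} (A : Matrix (Fin m) (Fin n) ℂ) (W : Matrix (Fin n) (Fin m) ℂ)

lemma w_pow : ∀ j : ℕ, W * (A * W) ^ j = (W * A) ^ j * W := by
  intro j
  induction j with
  | zero => simp
  | succ t ih =>
    calc W * (A * W) ^ (t + 1) = W * ((A * W) ^ t * (A * W)) := by rw [pow_succ]
      _ = (W * (A * W) ^ t) * (A * W) := by rw [Matrix.mul_assoc]
      _ = ((W * A) ^ t * W) * (A * W) := by rw [ih]
      _ = (W * A) ^ t * ((W * A) * W) := by simp only [Matrix.mul_assoc]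
      _ = (W * A) ^ (t + 1) * W := by rw [← Matrix.mul_assoc, ← pow_succ]

lemma a_pow_w : ∀ j : ℕ, A * ((W * A) ^ j * W) = (A * W) ^ (j + 1) := by
  intro j
  have h := w_pow W A j
  calc A * ((W * A) ^ j * W) = (A * (W * A) ^ j) * W := by rw [← Matrix.mul_assoc]
    _ = ((A * W) ^ j * A) * W := by rw [h]
    _ = (A * W) ^ j * (A * W) := by rw [Matrix.mul_assoc]
    _ = (A * W) ^ (j + 1) := by rw [← pow_succ]

lemma satisfies_of {k : ℕ} {Y : Matrix (Fin n) (Fin n) ℂ}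
    (hS : ∃ S, (A * W) ^ (k + 1) * S = (A * W) ^ k)
    (h1 : Y * (W * A) ^ (k + 1) = (W * A) ^ k)
    (h2 : (W * A) * (Y * Y) = Y)
    (h3 : ((W * A) * Y)ᴴ = (W * A) * Y) :
    A * (Y * Y) * W * (A * W) ^ (k + 1) = (A * W) ^ k ∧
      A * W * (A * (Y * Y)) * W * (A * (Y * Y)) = A * (Y * Y) ∧
      (W * A * W * (A * (Y * Y)))ᴴ = W * A * W * (A * (Y * Y)) := by
  obtain ⟨S, hS⟩ := hS
  have hw := w_pow A W
  have haw := a_pow_w A W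
  refine ⟨?_, ?_, ?_⟩
  · calc A * (Y * Y) * W * (A * W) ^ (k + 1)
        = A * (Y * (Y * (W * (A * W) ^ (k + 1)))) := by simp only [Matrix.mul_assoc]
      _ = A * (Y * (Y * ((W * A) ^ (k + 1) * W))) := by rw [hw]
      _ = A * (Y * ((Y * (W * A) ^ (k + 1)) * W)) := by simp only [Matrix.mul_assoc]
      _ = A * (Y * ((W * A) ^ k * W)) := by rw [h1]
      _ = A * (Y * (W * (A * W) ^ k)) := by rw [← hw]
      _ = A * (Y * (W * ((A * W) ^ (k + 1) * S))) := by rw [← hS]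
      _ = A * (Y * ((W * (A * W) ^ (k + 1)) * S)) := by simp only [Matrix.mul_assoc]
      _ = A * (Y * (((W * A) ^ (k + 1) * W) * S)) := by rw [hw]
      _ = A * ((Y * (W * A) ^ (k + 1)) * (W * S)) := by simp only [Matrix.mul_assoc]
      _ = A * ((W * A) ^ k * (W * S)) := by rw [h1]
      _ = (A * ((W * A) ^ k * W)) * S := by simp only [Matrix.mul_assoc]
      _ = (A * W) ^ (k + 1) * S := by rw [haw]
      _ = (A * W) ^ k := hS
  · calc A * W * (A * (Y * Y)) * W * (A * (Y * Y))
        = A * (((W * A) * (Y * Y)) * ((W * A) * (Y * Y))) := by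
          simp only [Matrix.mul_assoc]
      _ = A * (Y * Y) := by rw [h2]
  · have hwx : W * A * W * (A * (Y * Y)) = (W * A) * Y := by
      calc W * A * W * (A * (Y * Y))
          = W * (A * ((W * A) * (Y * Y))) := by simp only [Matrix.mul_assoc]
        _ = W * (A * Y) := by rw [h2]
        _ = (W * A) * Y := by rw [← Matrix.mul_assoc]
    rw [hwx]
    exact h3

lemma conds_to_z {k : ℕ} {X : Matrix (Fin m) (Fin n) ℂ}
    (hX1 : X * W * (A * W) ^ (k + 1) = (A * W) ^ k)
    (hX2 : A * W * X * W * X = X)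
    (hX3 : (W * A * W * X)ᴴ = W * A * W * X) :
    (W * X) * (W * A) ^ (k + 1 + 1) = (W * A) ^ (k + 1) ∧
      (W * A) * ((W * X) * (W * X)) = W * X ∧
      ((W * A) * (W * X))ᴴ = (W * A) * (W * X) ∧
      X = A * ((W * X) * (W * X)) := by
  have hw := w_pow A W
  refine ⟨?_, ?_, ?_, ?_⟩
  · calc (W * X) * (W * A) ^ (k + 1 + 1)
        = (W * X) * ((W * A) ^ (k + 1) * (W * A)) := by rw [← pow_succ]
      _ = (W * X) * (((W * A) ^ (k + 1) * W) * A) := by simp only [Matrix.mul_assoc]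
      _ = (W * X) * ((W * (A * W) ^ (k + 1)) * A) := by rw [← hw]
      _ = (W * (X * W * (A * W) ^ (k + 1))) * A := by simp only [Matrix.mul_assoc]
      _ = (W * (A * W) ^ k) * A := by rw [hX1]
      _ = ((W * A) ^ k * W) * A := by rw [hw]
      _ = (W * A) ^ k * (W * A) := by rw [Matrix.mul_assoc]
      _ = (W * A) ^ (k + 1) := by rw [← pow_succ]
  · calc (W * A) * ((W * X) * (W * X))
        = W * (A * W * X * W * X) := by simp only [Matrix.mul_assoc]
      _ = W * X := by rw [hX2]
  · have h : (W * A) * (W * X) = W * A * W * X := by simp only [Matrix.mul_assoc]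
    rw [h]
    exact hX3
  · calc X = A * W * X * W * X := hX2.symm
      _ = A * ((W * X) * (W * X)) := by simp only [Matrix.mul_assoc]

end Rect

end CoreEPAux

theorem stmt1 {m n : ℕ} (A : Matrix (Fin m) (Fin n) ℂ) (W : Matrix (Fin n) (Fin m) ℂ)
    (k : ℕ) (hk : k = max (matIndex (A * W)) (matIndex (W * A))) :
    (∃! X : Matrix (Fin m) (Fin n) ℂ,
      X * W * (A * W) ^ (k + 1) = (A * W) ^ k ∧ A * W * X * W * X = X ∧
        (W * A * W * X)ᴴ = W * A * W * X) ∧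
    ∀ (X : Matrix (Fin m) (Fin n) ℂ) (Y : Matrix (Fin n) (Fin n) ℂ),
      (X * W * (A * W) ^ (k + 1) = (A * W) ^ k ∧ A * W * X * W * X = X ∧
        (W * A * W * X)ᴴ = W * A * W * X) → IsCoreEP (W * A) Y → X = A * (Y * Y) := by
  have hcM : matIndex (W * A) ≤ k := by rw [hk]; exact le_max_right _ _
  have hcN : matIndex (A * W) ≤ k := by rw [hk]; exact le_max_left _ _
  have hSn : ∃ S, (A * W) ^ (k + 1) * S = (A * W) ^ k :=
    CoreEPAux.exists_factor_right (A * W) (CoreEPAux.rank_stab (A * W) hcN)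
  obtain ⟨Y₀, y1, y2, y3⟩ := CoreEPAux.exists_level (W * A) hcM
  obtain ⟨c1, c2, c3⟩ := CoreEPAux.satisfies_of A W hSn y1 y2 y3
  obtain ⟨z1', z2', z3', hXz'⟩ := CoreEPAux.conds_to_z A W c1 c2 c3
  constructor
  · refine ⟨A * (Y₀ * Y₀), ⟨c1, c2, c3⟩, ?_⟩
    rintro X' ⟨hX1, hX2, hX3⟩
    obtain ⟨z1, z2, z3, hXz⟩ := CoreEPAux.conds_to_z A W hX1 hX2 hX3
    have hZZ : W * X' = W * (A * (Y₀ * Y₀)) :=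
      CoreEPAux.core_unique z1 z2 z3 z1' z2' z3'
    calc X' = A * ((W * X') * (W * X')) := hXz
      _ = A * ((W * (A * (Y₀ * Y₀))) * (W * (A * (Y₀ * Y₀)))) := by rw [hZZ]
      _ = A * (Y₀ * Y₀) := hXz'.symm
  · rintro X Y ⟨hX1, hX2, hX3⟩ ⟨g1, g2, g3⟩
    obtain ⟨z1, z2, z3, hXz⟩ := CoreEPAux.conds_to_z A W hX1 hX2 hX3
    have g2' : (W * A) * (Y * Y) = Y := by rw [← Matrix.mul_assoc]; exact g2
    have g1' : Y * (W * A) ^ (k + 1 + 1) = (W * A) ^ (k + 1) :=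
      CoreEPAux.lift_level g1 (le_trans hcM (Nat.le_succ k))
    have hZY : W * X = Y := CoreEPAux.core_unique z1 z2 z3 g1' g2' g3
    calc X = A * ((W * X) * (W * X)) := hXz
      _ = A * (Y * Y) := by rw [hZY]
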